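/- Let ℓ be a prime and let P be a finite ℓ-group. Suppose P has a normal subgroup H that is an elementary abelian ℓ-subgroup of rank at least ℓ+1 (i.e. |H| = ℓ^r with r ≥ ℓ+1). Then P has no maximal elementary abelian ℓ-subgroup of rank 2; that is, every elementary abelian ℓ-subgroup E of P with |E| = ℓ² is properly contained in some elementary abelian ℓ-subgroup of P. -/

import Mathlib

/-- An elementary abelian `ℓ`-subgroup: a subgroup that is commutative and in which
every element `x` satisfies `x ^ ℓ = 1`. -/
def IsElementaryAbelian (ℓ : ℕ) {G : Type*} [Group G] (E : Subgroup G) : Prop :=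
  (∀ x ∈ E, ∀ y ∈ E, x * y = y * x) ∧ ∀ x ∈ E, x ^ ℓ = 1

/-- The conjugate subgroup `g E g⁻¹`. -/
def conjSubgroup {G : Type*} [Group G] (g : G) (E : Subgroup G) : Subgroup G :=
  E.map (MulAut.conj g).toMonoidHom

/-- A maximal elementary abelian `ℓ`-subgroup: one that is not properly contained in
any other elementary abelian `ℓ`-subgroup. -/
def IsMaximalElementaryAbelian (ℓ : ℕ) {G : Type*} [Group G] (E : Subgroup G) : Prop :=
  IsElementaryAbelian ℓ E ∧
    ∀ E' : Subgroup G, IsElementaryAbelian ℓ E' → E ≤ E' → E' = E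

lemma extend_elemAb {G : Type*} [Group G] (ℓ : ℕ) (E : Subgroup G)
    (hE : IsElementaryAbelian ℓ E) (x : G) (hx : x ∉ E) (hxℓ : x ^ ℓ = 1)
    (hcomm : ∀ e ∈ E, x * e = e * x) :
    ∃ E' : Subgroup G, IsElementaryAbelian ℓ E' ∧ E < E' := by
  set S : Set G := (E : Set G) ∪ {x} with hS
  have hxS : x ∈ S := Or.inr rfl
  have hES : (E : Set G) ⊆ S := Set.subset_union_left
  have hpair : ∀ s ∈ S, ∀ t ∈ S, s * t = t * s := by
    rintro s (hs | hs) t (ht | ht)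
    · exact hE.1 s hs t ht
    · rw [Set.mem_singleton_iff] at ht; subst ht; exact (hcomm s hs).symm
    · rw [Set.mem_singleton_iff] at hs; subst hs; exact hcomm t ht
    · rw [Set.mem_singleton_iff] at hs ht; subst hs; subst ht; rfl
  have h1 : Subgroup.closure S ≤ Subgroup.centralizer S :=
    (Subgroup.closure_le _).mpr fun s hs => Subgroup.mem_centralizer_iff.mpr
      fun t ht => hpair t ht s hs
  have h2 : Subgroup.closure S ≤ Subgroup.centralizer (Subgroup.closure S) :=
    (Subgroup.closure_le _).mpr fun s hs => Subgroup.mem_centralizer_iff.mpr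
      fun t ht => (Subgroup.mem_centralizer_iff.mp (h1 ht) s hs).symm
  have hcomm2 : ∀ g ∈ Subgroup.closure S, ∀ h ∈ Subgroup.closure S, g * h = h * g :=
    fun g hg h hh => Subgroup.mem_centralizer_iff.mp (h2 hh) g hg
  have hpow : ∀ g ∈ Subgroup.closure S, g ^ ℓ = 1 := by
    let K : Subgroup G :=
      { carrier := {g | g ∈ Subgroup.closure S ∧ g ^ ℓ = 1}
        one_mem' := ⟨one_mem _, one_pow ℓ⟩
        mul_mem' := by
          rintro a b ⟨haS, ha⟩ ⟨hbS, hb⟩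
          refine ⟨mul_mem haS hbS, ?_⟩
          have hab : Commute a b := hcomm2 a haS b hbS
          rw [hab.mul_pow, ha, hb, one_mul]
        inv_mem' := by
          rintro a ⟨haS, ha⟩
          exact ⟨inv_mem haS, by rw [inv_pow, ha, inv_one]⟩ }
    have : Subgroup.closure S ≤ K := (Subgroup.closure_le _).mpr (by
      rintro s (hs | hs)
      · exact ⟨Subgroup.subset_closure (hES hs), hE.2 s hs⟩
      · rw [Set.mem_singleton_iff] at hs; subst hs
        exact ⟨Subgroup.subset_closure hxS, hxℓ⟩)
    exact fun g hg => (this hg).2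
  refine ⟨Subgroup.closure S, ⟨hcomm2, hpow⟩, ?_⟩
  rw [SetLike.lt_iff_le_and_exists]
  refine ⟨fun e he => Subgroup.subset_closure (hES he), x, Subgroup.subset_closure hxS, hx⟩

lemma card_ker_pow_le {R M : Type*} [CommRing R] [AddCommGroup M] [Module R M] [Finite M]
    (g : Module.End R M) (k : ℕ) :
    Nat.card (LinearMap.ker (g ^ k)) ≤ Nat.card (LinearMap.ker g) ^ k := by
  induction k with
  | zero =>
    simp only [pow_zero]
    have : LinearMap.ker (1 : Module.End R M) = ⊥ := LinearMap.ker_id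
    rw [this]
    simp
  | succ k ih =>
    have hsub : ∀ m ∈ LinearMap.ker (g ^ (k + 1)), g m ∈ LinearMap.ker (g ^ k) := by
      intro m hm
      rw [LinearMap.mem_ker] at hm ⊢
      rw [← Module.End.mul_apply, ← pow_succ]
      exact hm

    set φ : LinearMap.ker (g ^ (k + 1)) →ₗ[R] LinearMap.ker (g ^ k) := g.restrict hsub with hφ
    have hcardeq : Nat.card (LinearMap.ker (g ^ (k + 1))) =
        Nat.card (LinearMap.ker φ) * Nat.card (↥(LinearMap.ker (g ^ (k + 1))) ⧸ LinearMap.ker φ) :=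
      Submodule.card_eq_card_quotient_mul_card _
    have hquot : Nat.card (↥(LinearMap.ker (g ^ (k + 1))) ⧸ LinearMap.ker φ)
        = Nat.card (LinearMap.range φ) :=
      Nat.card_congr φ.quotKerEquivRange.toEquiv
    have hrange : Nat.card (LinearMap.range φ) ≤ Nat.card (LinearMap.ker (g ^ k)) :=
      Nat.card_le_card_of_injective (fun m => m.1) Subtype.val_injective
    have hker : Nat.card (LinearMap.ker φ) ≤ Nat.card (LinearMap.ker g) := by
      have hmem : ∀ m : LinearMap.ker φ, (m.1.1 : M) ∈ LinearMap.ker g := by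
        intro m
        have h0 := m.2
        rw [LinearMap.mem_ker] at h0
        have h1 := congrArg Subtype.val h0
        exact LinearMap.mem_ker.mpr h1
      refine Nat.card_le_card_of_injective (fun m => ⟨m.1.1, hmem m⟩) ?_
      intro m n h
      simp only [Subtype.mk.injEq] at h
      exact Subtype.ext (Subtype.ext h)
    calc Nat.card (LinearMap.ker (g ^ (k + 1)))
        = Nat.card (LinearMap.ker φ) * Nat.card (LinearMap.range φ) := by rw [hcardeq, hquot]
      _ ≤ Nat.card (LinearMap.ker g) * Nat.card (LinearMap.ker (g ^ k)) :=
          Nat.mul_le_mul hker hrange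
      _ ≤ Nat.card (LinearMap.ker g) * Nat.card (LinearMap.ker g) ^ k :=
          Nat.mul_le_mul_left _ ih
      _ = Nat.card (LinearMap.ker g) ^ (k + 1) := (pow_succ' _ _).symm

lemma conj_fixed_large (ℓ : ℕ) (hℓ : ℓ.Prime) (G : Type*) [CommGroup G] [Finite G]
    (hexp : ∀ x : G, x ^ ℓ = 1) (φ : G →* G) (hφ : ∀ x, φ^[ℓ] x = x)
    (r : ℕ) (hr : ℓ + 1 ≤ r) (hG : Nat.card G = ℓ ^ r) :
    ℓ < Nat.card {x : G // φ x = x} := by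
  haveI := Fact.mk hℓ
  have hl2 : 2 ≤ ℓ := hℓ.two_le
  haveI : Module (ZMod ℓ) (Additive G) :=
    AddCommGroup.zmodModule (by
      intro x
      apply Additive.toMul.injective
      rw [toMul_nsmul, toMul_zero]
      exact hexp _)
  set f : Module.End (ZMod ℓ) (Additive G) :=
    AddMonoidHom.toZModLinearMap ℓ (MonoidHom.toAdditive φ) with hfdef
  have hiter : ∀ (k : ℕ) (m : Additive G),
      (f ^ k) m = Additive.ofMul (φ^[k] (Additive.toMul m)) := by
    intro k
    induction k with
    | zero => intro m; simp
    | succ k ih =>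
      intro m
      rw [pow_succ, Module.End.mul_apply, ih (f m), Function.iterate_succ_apply]
      rfl
  have hfl : f ^ ℓ = 1 := by
    apply LinearMap.ext
    intro m
    rw [Module.End.one_apply, hiter ℓ m, hφ]
    rfl
  haveI : Nontrivial G := by
    rw [← Finite.one_lt_card_iff_nontrivial, hG]
    exact Nat.one_lt_pow (by omega) (by omega)
  haveI : Nontrivial (Module.End (ZMod ℓ) (Additive G)) := by
    obtain ⟨m, hm⟩ := exists_ne (0 : Additive G)
    exact ⟨1, 0, fun h => hm (by simpa using congrFun (congrArg DFunLike.coe h) m)⟩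
  haveI : CharP (Module.End (ZMod ℓ) (Additive G)) ℓ :=
    charP_of_injective_ringHom
      (algebraMap (ZMod ℓ) (Module.End (ZMod ℓ) (Additive G))).injective ℓ
  set g : Module.End (ZMod ℓ) (Additive G) := f - 1 with hgdef
  have hgl : g ^ ℓ = 0 := by
    rw [hgdef, sub_pow_char_of_commute ℓ (Commute.one_right f), hfl, one_pow, sub_self]
  have hcard_ker : ℓ ^ r ≤ Nat.card (LinearMap.ker g) ^ ℓ := by
    have h1 := card_ker_pow_le g ℓ
    rw [hgl, LinearMap.ker_zero] at h1
    have h3 : Nat.card (⊤ : Submodule (ZMod ℓ) (Additive G)) = Nat.card (Additive G) :=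
      Nat.card_congr Submodule.topEquiv.toEquiv
    have h4 : Nat.card (Additive G) = ℓ ^ r := by
      rw [← hG]; exact Nat.card_congr Additive.toMul
    rw [h3, h4] at h1
    exact h1
  have hlc : ℓ < Nat.card (LinearMap.ker g) := by
    by_contra hcon
    push_neg at hcon
    have h5 : Nat.card (LinearMap.ker g) ^ ℓ ≤ ℓ ^ ℓ := Nat.pow_le_pow_left hcon ℓ
    have h6 : ℓ ^ r ≤ ℓ ^ ℓ := le_trans hcard_ker h5
    have h7 : r ≤ ℓ := (Nat.pow_le_pow_iff_right (by omega)).mp h6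
    omega
  have hcardeq : Nat.card (LinearMap.ker g) = Nat.card {x : G // φ x = x} := by
    refine Nat.card_congr ⟨fun m => ⟨Additive.toMul m.1, ?_⟩,
      fun x => ⟨Additive.ofMul x.1, ?_⟩, fun m => rfl, fun x => rfl⟩
    · have h0 : (f - 1) (m.1 : Additive G) = 0 := m.2
      rw [LinearMap.sub_apply, Module.End.one_apply, sub_eq_zero] at h0
      exact congrArg Additive.toMul h0
    · show (f - 1) (Additive.ofMul x.1) = 0
      rw [LinearMap.sub_apply, Module.End.one_apply, sub_eq_zero]
      exact congrArg Additive.ofMul x.2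
  rwa [hcardeq] at hlc


/-- If a finite `ℓ`-group `P` has a normal elementary abelian subgroup of
rank at least `ℓ + 1`, then `P` has no maximal elementary abelian `ℓ`-subgroup of rank 2. -/
theorem no_maximal_rank_two_of_normal_large_elemAb
    (ℓ : ℕ) (hℓ : ℓ.Prime) (P : Type*) [Group P] [Finite P] (hP : IsPGroup ℓ P)
    (H : Subgroup P) (hHnormal : H.Normal) (hHea : IsElementaryAbelian ℓ H)
    (r : ℕ) (hr : ℓ + 1 ≤ r) (hHcard : Nat.card H = ℓ ^ r) :
    ∀ E : Subgroup P, IsElementaryAbelian ℓ E → Nat.card E = ℓ ^ 2 →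
      ∃ E' : Subgroup P, IsElementaryAbelian ℓ E' ∧ E < E' := by
  intro E hE hEcard
  haveI := Fact.mk hℓ
  have hl2 : 2 ≤ ℓ := hℓ.two_le
  have hr3 : 3 ≤ r := by omega
  by_cases hEH : E ≤ H
  · refine ⟨H, hHea, lt_of_le_of_ne hEH ?_⟩
    intro h
    rw [h, hHcard] at hEcard
    have := Nat.pow_right_injective hl2 hEcard
    omega
  · obtain ⟨a, haE, haH⟩ := SetLike.not_le_iff_exists.mp hEH
    -- it suffices to find a suitable commuting element outside E
    have key : ∀ x : P, x ∈ H → x ∉ E → (∀ e ∈ E, x * e = e * x) →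
        ∃ E' : Subgroup P, IsElementaryAbelian ℓ E' ∧ E < E' := by
      intro x hxH hxE hxcomm
      exact extend_elemAb ℓ E hE x hxE (hHea.2 x hxH) hxcomm
    have hd : Nat.card ↥(H ⊓ E) ∣ ℓ ^ 2 := hEcard ▸ Subgroup.card_dvd_of_le inf_le_right
    obtain ⟨i, hi2, hci⟩ := (Nat.dvd_prime_pow hℓ).mp hd
    have hine2 : i ≠ 2 := by
      intro h
      subst h
      have : H ⊓ E = E := Subgroup.eq_of_le_of_card_ge inf_le_right (by rw [hEcard, hci])
      exact hEH (this ▸ inf_le_left)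
    interval_cases i
    · -- H ⊓ E = ⊥ : use fixed points of the conjugation action of E on H
      rw [pow_zero, Subgroup.card_eq_one] at hci
      letI : MulAction ↥E ↥H :=
        { smul := fun e h => ⟨(e : P) * h * (e : P)⁻¹, hHnormal.conj_mem _ h.2 _⟩
          one_smul := fun h => Subtype.ext (by
            show ((1 : ↥E) : P) * (h : P) * ((1 : ↥E) : P)⁻¹ = (h : P)
            simp)
          mul_smul := fun e f h => Subtype.ext (by
            show ((e * f : ↥E) : P) * (h : P) * ((e * f : ↥E) : P)⁻¹
              = (e : P) * ((f : P) * (h : P) * (f : P)⁻¹) * (e : P)⁻¹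
            push_cast
            group) }
      have hfix1 : (1 : ↥H) ∈ MulAction.fixedPoints ↥E ↥H := by
        intro e
        refine Subtype.ext ?_
        show (e : P) * ((1 : ↥H) : P) * (e : P)⁻¹ = ((1 : ↥H) : P)
        simp
      have hdvd : ℓ ∣ Nat.card ↥H := hHcard ▸ dvd_pow_self ℓ (by omega)
      obtain ⟨b, hbfix, hb1⟩ :=
        (IsPGroup.to_subgroup hP E).exists_fixed_point_of_prime_dvd_card_of_fixed_point ↥H
          hdvd hfix1
      refine key (b : P) b.2 ?_ ?_
      · intro hbE
        have hmem : (b : P) ∈ H ⊓ E := ⟨b.2, hbE⟩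
        rw [hci, Subgroup.mem_bot] at hmem
        exact hb1 (Subtype.ext hmem.symm)
      · intro e he
        have h2 : (e : P) * (b : P) * (e : P)⁻¹ = (b : P) :=
          congrArg Subtype.val (hbfix ⟨e, he⟩)
        calc (b : P) * e = (e * (b : P) * e⁻¹) * e := by rw [h2]
          _ = e * (b : P) := by group
    · -- |H ⊓ E| = ℓ
      rw [pow_one] at hci
      haveI : Nontrivial ↥(H ⊓ E) := by
        rw [← Finite.one_lt_card_iff_nontrivial, hci]; omega
      obtain ⟨z', hz'⟩ := exists_ne (1 : ↥(H ⊓ E))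
      set z : P := (z' : P) with hzdef
      have hzmem : z ∈ H ⊓ E := z'.2
      have hzH : z ∈ H := hzmem.1
      have hzE : z ∈ E := hzmem.2
      have horder : orderOf z = ℓ := by
        have h1 : orderOf z' ∣ ℓ := hci ▸ orderOf_dvd_natCard z'
        have h2 : orderOf z' ≠ 1 := by simpa [orderOf_eq_one_iff] using hz'
        have h3 := (Nat.Prime.eq_one_or_self_of_dvd hℓ _ h1).resolve_left h2
        rw [Subgroup.orderOf_coe z', h3]
      have hzp : Subgroup.zpowers z = H ⊓ E :=
        Subgroup.eq_of_le_of_card_ge (Subgroup.zpowers_le.mpr hzmem)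
          (by rw [hci, Nat.card_zpowers, horder])
      have hKE : Subgroup.closure ({z, a} : Set P) ≤ E := by
        rw [Subgroup.closure_le]
        intro y hy
        rcases hy with rfl | hy
        · exact hzE
        · rw [Set.mem_singleton_iff] at hy; subst hy; exact haE
      have hzK : z ∈ Subgroup.closure ({z, a} : Set P) :=
        Subgroup.subset_closure (Set.mem_insert _ _)
      have haK : a ∈ Subgroup.closure ({z, a} : Set P) :=
        Subgroup.subset_closure (Set.mem_insert_of_mem _ rfl)
      have hKeq : Subgroup.closure ({z, a} : Set P) = E := by
        have hdK : Nat.card (Subgroup.closure ({z, a} : Set P)) ∣ ℓ ^ 2 :=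
          hEcard ▸ Subgroup.card_dvd_of_le hKE
        obtain ⟨j, hj2, hcj⟩ := (Nat.dvd_prime_pow hℓ).mp hdK
        have hlK : ℓ ∣ Nat.card (Subgroup.closure ({z, a} : Set P)) := by
          have h4 := Subgroup.card_dvd_of_le (Subgroup.zpowers_le.mpr hzK)
          rwa [Nat.card_zpowers, horder] at h4
        have hj : j = 2 := by
          by_contra hjne
          interval_cases j
          · rw [pow_zero] at hcj; rw [hcj] at hlK
            exact absurd (Nat.le_of_dvd one_pos hlK) (by omega)
          · have h5 : Subgroup.zpowers z = Subgroup.closure ({z, a} : Set P) :=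
              Subgroup.eq_of_le_of_card_ge (Subgroup.zpowers_le.mpr hzK)
                (by rw [Nat.card_zpowers, horder, hcj, pow_one])
            have h6 : a ∈ Subgroup.zpowers z := h5 ▸ haK
            exact haH ((Subgroup.zpowers_le.mpr hzH) h6)
          · exact hjne rfl
        subst hj
        exact Subgroup.eq_of_le_of_card_ge hKE (by rw [hEcard, hcj])
      -- use the fixed points of conjugation by `a` on `H`
      letI : CommGroup ↥H :=
        { (inferInstance : Group ↥H) with
          mul_comm := fun x y => Subtype.ext (hHea.1 _ x.2 _ y.2) }
      set φ : ↥H →* ↥H :=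
        { toFun := fun h => ⟨a * (h : P) * a⁻¹, hHnormal.conj_mem _ h.2 _⟩
          map_one' := Subtype.ext (by simp)
          map_mul' := fun h k => Subtype.ext (by
            show a * ((h : P) * (k : P)) * a⁻¹ = (a * h * a⁻¹) * (a * k * a⁻¹)
            group) } with hφdef
  
      have hφapply : ∀ x : ↥H, ((φ x : ↥H) : P) = a * (x : P) * a⁻¹ := fun x => rfl
      have hφiter : ∀ (k : ℕ) (x : ↥H), ((φ^[k] x : ↥H) : P) = a ^ k * (x : P) * (a ^ k)⁻¹ := by
        intro k
        induction k with
        | zero => intro x; simp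
        | succ k ih =>
          intro x
          rw [Function.iterate_succ_apply, ih (φ x), hφapply x, pow_succ]
          group
      have haℓ : a ^ ℓ = 1 := hE.2 a haE
      have hφl : ∀ x, φ^[ℓ] x = x := by
        intro x
        refine Subtype.ext ?_
        rw [hφiter ℓ x, haℓ]
        simp
      have hexp : ∀ x : ↥H, x ^ ℓ = 1 := by
        intro x
        refine Subtype.ext ?_
        rw [SubmonoidClass.coe_pow]
        exact hHea.2 _ x.2
      have hlt := conj_fixed_large ℓ hℓ ↥H hexp φ hφl r hr hHcard
      have hex : ∃ x : {x : ↥H // φ x = x}, ((x : ↥H) : P) ∉ E := by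
        by_contra hcon
        push_neg at hcon
        have hinj : Function.Injective
            (fun x : {x : ↥H // φ x = x} =>
              (⟨((x : ↥H) : P), ⟨(x : ↥H).2, hcon x⟩⟩ : ↥(H ⊓ E))) := by
          intro x1 x2 h
          simp only [Subtype.mk.injEq] at h
          exact Subtype.ext (Subtype.ext (congrArg (fun t : ↥(H ⊓ E) => (t : P)) h))
        have h8 := Nat.card_le_card_of_injective _ hinj
        rw [hci] at h8
        omega
      obtain ⟨x, hxE⟩ := hex
      set y : ↥H := (x : ↥H) with hydef
      have hya : a * (y : P) * a⁻¹ = (y : P) := by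
        have h0 := congrArg (fun t : ↥H => (t : P)) x.2
        rw [← hφapply y]
        exact h0
      refine key (y : P) y.2 hxE ?_
      intro e he
      rw [← hKeq] at he
      have hcent : Subgroup.closure ({z, a} : Set P) ≤ Subgroup.centralizer {(y : P)} := by
        rw [Subgroup.closure_le]
        intro w hw
        rw [SetLike.mem_coe, Subgroup.mem_centralizer_iff]
        intro t ht
        rw [Set.mem_singleton_iff] at ht; subst ht
        rcases hw with rfl | hw
        · exact hHea.1 _ y.2 _ hzH
        · rw [Set.mem_singleton_iff] at hw
          rw [hw]
          calc (y : P) * a = (a * (y : P) * a⁻¹) * a := by rw [hya]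
            _ = a * (y : P) := by group
      exact Subgroup.mem_centralizer_iff.mp (hcent he) (y : P) rfl
    · exact absurd rfl hine2
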